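/- Let λ(ρ) = a + bρ² with a, b > 0. If u ≠ v are positive reals with u/λ(u) = v/λ(v), then uv = a/b; moreover for the larger of the two values, say u > √(a/b), the stability condition λ'(u)u < λ(u) fails, i.e. λ'(u)u ≥ λ(u). -/

import Mathlib

/-- For quadratic λ(ρ) = a + bρ², if u ≠ v are positive with
u/λ(u) = v/λ(v), then uv = a/b, and the larger value u > √(a/b) violates the
stability condition: λ'(u)·u ≥ λ(u). -/
theorem quadratic_turning_no_stable_pair
    (a b u v : ℝ) (ha : 0 < a) (hb : 0 < b)
    (hu : 0 < u) (hv : 0 < v) (huv : u ≠ v)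
    (hΛ : u / (a + b * u ^ 2) = v / (a + b * v ^ 2)) :
    u * v = a / b ∧
    (Real.sqrt (a / b) < u →
      (a + b * u ^ 2) ≤ deriv (fun ρ => a + b * ρ ^ 2) u * u) := by
  have hpu : 0 < a + b * u ^ 2 := by positivity
  have hpv : 0 < a + b * v ^ 2 := by positivity
  have hcross : u * (a + b * v ^ 2) = v * (a + b * u ^ 2) := by
    field_simp at hΛ; linarith
  have hkey : u * v = a / b := by
    have h : (u - v) * (a - b * (u * v)) = 0 := by ring_nf; nlinarith [hcross]
    have huv' : u - v ≠ 0 := sub_ne_zero.mpr huv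
    have : a - b * (u * v) = 0 := by
      rcases mul_eq_zero.mp h with h' | h'
      · exact absurd h' huv'
      · exact h'
    field_simp
    linarith
  refine ⟨hkey, fun hsq => ?_⟩
  have hd : deriv (fun ρ : ℝ => a + b * ρ ^ 2) u = 2 * b * u := by
    have : HasDerivAt (fun ρ : ℝ => a + b * ρ ^ 2) (2 * b * u) u := by
      have h1 : HasDerivAt (fun ρ : ℝ => ρ ^ 2) (2 * u) u := by
        simpa using hasDerivAt_pow 2 u
      have := (h1.const_mul b).const_add a
      rw [show 2 * b * u = b * (2 * u) by ring]; exact this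
    exact this.deriv
  rw [hd]
  have hab : 0 ≤ a / b := le_of_lt (by positivity)
  have : a / b < u ^ 2 := by
    nlinarith [Real.sq_sqrt hab, Real.sqrt_nonneg (a / b), hsq]
  have : a < b * u ^ 2 := by
    have := (div_lt_iff₀ hb).mp this
    linarith
  nlinarith
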